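/- Let R = ℂ[x_1,…,x_n] and let I_1, I_2 ⊆ R be homogeneous ideals. Then for every k ∈ ℕ the truncated dual spaces satisfy D_0^k[I_1 ∩ I_2] = D_0^k[I_1] + D_0^k[I_2]. -/

import Mathlib

open MvPolynomial

noncomputable section

/-- Apolarity pairing `⟨q, f⟩ = ∑ α (coeff α q) * (coeff α f)`. -/
def apair {n : ℕ} (q f : MvPolynomial (Fin n) ℂ) : ℂ :=
  ∑ α ∈ q.support, q.coeff α * f.coeff α

lemma apair_eq_sum {n : ℕ} {q : MvPolynomial (Fin n) ℂ} {s : Finset (Fin n →₀ ℕ)}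
    (h : q.support ⊆ s) (f : MvPolynomial (Fin n) ℂ) :
    apair q f = ∑ α ∈ s, q.coeff α * f.coeff α :=
  Finset.sum_subset h (fun α _ hα => by
    rw [MvPolynomial.notMem_support_iff.mp hα, zero_mul])

/-- The Macaulay dual space `D_0[I]` of an ideal at the origin. -/
def dualSpace {n : ℕ} (I : Ideal (MvPolynomial (Fin n) ℂ)) :
    Submodule ℂ (MvPolynomial (Fin n) ℂ) where
  carrier := {q | ∀ f ∈ I, apair q f = 0}
  zero_mem' := by intro f hf; simp [apair]
  add_mem' := by
    intro a b ha hb f hf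
    have h : apair (a + b) f = apair a f + apair b f := by
      rw [apair_eq_sum (s := a.support ∪ b.support) MvPolynomial.support_add,
        apair_eq_sum (s := a.support ∪ b.support) Finset.subset_union_left,
        apair_eq_sum (s := a.support ∪ b.support) Finset.subset_union_right,
        ← Finset.sum_add_distrib]
      exact Finset.sum_congr rfl fun α _ => by rw [coeff_add, add_mul]
    rw [h, ha f hf, hb f hf, add_zero]
  smul_mem' := by
    intro c q hq f hf
    have h : apair (c • q) f = c * apair q f := by
      rw [apair_eq_sum (s := q.support) MvPolynomial.support_smul, apair, Finset.mul_sum]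
      exact Finset.sum_congr rfl fun α _ => by rw [coeff_smul, smul_eq_mul, mul_assoc]
    rw [h, hq f hf, mul_zero]

open scoped Classical in
/-- The contraction `g ∘ q`, realizing the action of `g` on differential functionals:
`coeff α (contract g q) = ∑ β, coeff β g * coeff (α + β) q`. -/
def contract {n : ℕ} (g q : MvPolynomial (Fin n) ℂ) : MvPolynomial (Fin n) ℂ :=
  ∑ β ∈ g.support, ∑ α ∈ q.support,
    if β ≤ α then monomial (α - β) (g.coeff β * q.coeff α) else 0

/-- The truncated dual space `D_0^k[I]`. -/
def truncDual {n : ℕ} (k : ℕ) (I : Ideal (MvPolynomial (Fin n) ℂ)) :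
    Submodule ℂ (MvPolynomial (Fin n) ℂ) where
  carrier := {q | q ∈ dualSpace I ∧ q.totalDegree ≤ k}
  zero_mem' := ⟨(dualSpace I).zero_mem, by simp⟩
  add_mem' := fun ha hb => ⟨(dualSpace I).add_mem ha.1 hb.1,
    le_trans (MvPolynomial.totalDegree_add _ _) (max_le ha.2 hb.2)⟩
  smul_mem' := fun c q hq => ⟨(dualSpace I).smul_mem c hq.1,
    le_trans (MvPolynomial.totalDegree_smul_le c q) hq.2⟩

-- AUX
lemma apair_add_right {n : ℕ} (q f g : MvPolynomial (Fin n) ℂ) :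
    apair q (f + g) = apair q f + apair q g := by
  simp [apair, coeff_add, mul_add, Finset.sum_add_distrib]

lemma apair_smul_right {n : ℕ} (c : ℂ) (q f : MvPolynomial (Fin n) ℂ) :
    apair q (c • f) = c * apair q f := by
  simp [apair, Finset.mul_sum]
  exact Finset.sum_congr rfl fun α _ => by ring

lemma apair_add_left {n : ℕ} (a b f : MvPolynomial (Fin n) ℂ) :
    apair (a + b) f = apair a f + apair b f := by
  rw [apair_eq_sum (s := a.support ∪ b.support) MvPolynomial.support_add,
    apair_eq_sum (s := a.support ∪ b.support) Finset.subset_union_left,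
    apair_eq_sum (s := a.support ∪ b.support) Finset.subset_union_right,
    ← Finset.sum_add_distrib]
  exact Finset.sum_congr rfl fun α _ => by rw [coeff_add, add_mul]

lemma apair_smul_left {n : ℕ} (c : ℂ) (q f : MvPolynomial (Fin n) ℂ) :
    apair (c • q) f = c * apair q f := by
  rw [apair_eq_sum (s := q.support) MvPolynomial.support_smul, apair, Finset.mul_sum]
  exact Finset.sum_congr rfl fun α _ => by rw [coeff_smul, smul_eq_mul, mul_assoc]

lemma apair_monomial {n : ℕ} (q : MvPolynomial (Fin n) ℂ) (α : Fin n →₀ ℕ) :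
    apair q (monomial α 1) = q.coeff α := by
  classical
  rw [apair, Finset.sum_eq_single α]
  · simp [coeff_monomial]
  · intro b _ hb; simp [coeff_monomial, Ne.symm hb]
  · intro h; simp [MvPolynomial.notMem_support_iff.mp h]

lemma apair_trunc {n k : ℕ} (q f : MvPolynomial (Fin n) ℂ) (hq : q.totalDegree ≤ k) :
    apair q (∑ d ∈ Finset.range (k + 1), homogeneousComponent d f) = apair q f := by
  rw [apair, apair]
  refine Finset.sum_congr rfl fun α hα => ?_
  congr 1
  rw [coeff_sum]
  simp only [coeff_homogeneousComponent]
  rw [Finset.sum_ite_eq (Finset.range (k+1)) α.degree fun _ => f.coeff α]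
  have : α.degree ∈ Finset.range (k+1) := by
    rw [Finset.mem_range, Nat.lt_succ_iff]
    exact le_trans (le_totalDegree hα) hq
  simp [this]

/-- The apolarity pairing as a linear map on the truncated space. -/
def apairMap (n k : ℕ) : restrictTotalDegree (Fin n) ℂ k →ₗ[ℂ]
    Module.Dual ℂ (restrictTotalDegree (Fin n) ℂ k) where
  toFun q :=
    { toFun := fun f => apair q.1 f.1
      map_add' := fun f g => apair_add_right _ _ _
      map_smul' := fun c f => apair_smul_right _ _ _ }
  map_add' a b := by ext f; exact apair_add_left _ _ _
  map_smul' c q := by ext f; exact apair_smul_left _ _ _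

lemma apairMap_injective (n k : ℕ) : Function.Injective (apairMap n k) := by
  rw [injective_iff_map_eq_zero]
  intro q hq
  ext1
  rw [ZeroMemClass.coe_zero]
  apply MvPolynomial.ext
  intro α
  rw [MvPolynomial.coeff_zero]
  by_cases hα : α ∈ q.1.support
  · have hmem : monomial α (1:ℂ) ∈ restrictTotalDegree (Fin n) ℂ k := by
      rw [mem_restrictTotalDegree]
      refine le_trans (totalDegree_monomial_le α 1) ?_
      exact le_trans (le_totalDegree hα) ((mem_restrictTotalDegree _ _ _).mp q.2)
    have := congrFun (congrArg DFunLike.coe hq) ⟨monomial α 1, hmem⟩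
    simpa [apairMap, apair_monomial] using this
  · exact MvPolynomial.notMem_support_iff.mp hα

def apairEquiv (n k : ℕ) : restrictTotalDegree (Fin n) ℂ k ≃ₗ[ℂ]
    Module.Dual ℂ (restrictTotalDegree (Fin n) ℂ k) :=
  (apairMap n k).linearEquivOfInjective (apairMap_injective n k)
    Subspace.dual_finrank_eq.symm

/-- Truncation of an ideal to the subspace of degree ≤ k. -/
lemma apairEquiv_apply (n k : ℕ) (v w : restrictTotalDegree (Fin n) ℂ k) :
    apairEquiv n k v w = apair v.1 w.1 := by
  rw [apairEquiv, LinearMap.linearEquivOfInjective_apply]; rfl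

def truncIdeal (n k : ℕ) (I : Ideal (MvPolynomial (Fin n) ℂ)) :
    Submodule ℂ (restrictTotalDegree (Fin n) ℂ k) :=
  (I.restrictScalars ℂ).comap (restrictTotalDegree (Fin n) ℂ k).subtype

lemma truncDual_eq (n k : ℕ) (I : Ideal (MvPolynomial (Fin n) ℂ))
    (hI : ∀ f ∈ I, ∀ d : ℕ, homogeneousComponent d f ∈ I) :
    truncDual k I = Submodule.map (restrictTotalDegree (Fin n) ℂ k).subtype
      (((truncIdeal n k I).dualAnnihilator).comap (apairEquiv n k).toLinearMap) := by
  ext q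
  constructor
  · rintro ⟨hann, hdeg⟩
    refine ⟨⟨q, (mem_restrictTotalDegree _ _ _).mpr hdeg⟩, ?_, rfl⟩
    simp only [SetLike.mem_coe, Submodule.mem_comap, Submodule.mem_dualAnnihilator]
    intro w hw
    simp only [LinearEquiv.coe_coe, apairEquiv_apply]
    exact hann w.1 hw
  · rintro ⟨v, hv, rfl⟩
    simp only [SetLike.mem_coe, Submodule.mem_comap, Submodule.mem_dualAnnihilator] at hv
    have hdeg : (v : MvPolynomial (Fin n) ℂ).totalDegree ≤ k :=
      (mem_restrictTotalDegree _ _ _).mp v.2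
    refine ⟨?_, hdeg⟩
    intro f hf
    set f' := ∑ d ∈ Finset.range (k + 1), homogeneousComponent d f with hf'
    have hf'I : f' ∈ I := Ideal.sum_mem _ fun d _ => hI f hf d
    have hf'V : f' ∈ restrictTotalDegree (Fin n) ℂ k := by
      refine Submodule.sum_mem _ fun d hd => ?_
      rw [mem_restrictTotalDegree]
      exact le_trans (homogeneousComponent_isHomogeneous d f).totalDegree_le
        (Nat.lt_succ_iff.mp (Finset.mem_range.mp hd))
    simp only [LinearEquiv.coe_coe, apairEquiv_apply] at hv
    have h2 : apair (v : MvPolynomial (Fin n) ℂ) f' = 0 := hv ⟨f', hf'V⟩ hf'I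
    show apair (v : MvPolynomial (Fin n) ℂ) f = 0
    rw [← apair_trunc _ f hdeg, h2]

/-- For homogeneous ideals `I₁, I₂`, the truncated dual spaces satisfy
`D_0^k[I₁ ∩ I₂] = D_0^k[I₁] + D_0^k[I₂]` for every `k`. -/
theorem truncDual_inf_of_homogeneous (n : ℕ) (I₁ I₂ : Ideal (MvPolynomial (Fin n) ℂ))
    (h₁ : ∀ f ∈ I₁, ∀ d : ℕ, homogeneousComponent d f ∈ I₁)
    (h₂ : ∀ f ∈ I₂, ∀ d : ℕ, homogeneousComponent d f ∈ I₂)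
    (k : ℕ) :
    truncDual k (I₁ ⊓ I₂) = truncDual k I₁ + truncDual k I₂ := by
  have h12 : ∀ f ∈ I₁ ⊓ I₂, ∀ d : ℕ, homogeneousComponent d f ∈ I₁ ⊓ I₂ :=
    fun f hf d => ⟨h₁ f hf.1 d, h₂ f hf.2 d⟩
  have hti : truncIdeal n k (I₁ ⊓ I₂) = truncIdeal n k I₁ ⊓ truncIdeal n k I₂ := by
    ext v; simp [truncIdeal, Submodule.mem_comap]
  rw [truncDual_eq n k _ h12, truncDual_eq n k _ h₁, truncDual_eq n k _ h₂, hti,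
    Subspace.dualAnnihilator_inf_eq,
    Submodule.comap_equiv_eq_map_symm, Submodule.comap_equiv_eq_map_symm,
    Submodule.comap_equiv_eq_map_symm, Submodule.map_sup, Submodule.map_sup,
    Submodule.add_eq_sup]
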